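/- arXiv:1207.5969 — 2 statements merged into one kernel-verified Lean document; each statement's English description precedes it below -/
import Mathlib

section
/- Let Q ⊂ ℝ^{n-1} be a compact convex polytope with nonempty interior, fix x₀ in the interior of Q, and let v : Q → ℝ be a continuous convex function, differentiable in the interior, with v ≥ 0, v(x₀) = 0, and ∫_{∂Q} v dσ ≤ C₁. Then for every ε > 0 there exists a constant C depending only on ε, C₁ and Q such that v(x) ≤ C for every x in Q whose distance to ∂Q is at least ε. -/
open Set MeasureTheory Metric
open scoped RealInnerProductSpace NNReal ENNReal

noncomputable section Stmt6Aux

variable {E : Type*} [NormedAddCommGroup E] [InnerProductSpace ℝ E] [CompleteSpace E]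

/-- Difference of unit-normalizations bound. -/
lemma stmt6_unit_lip {a b : E} {c : ℝ} (hc : 0 < c) (ha : c ≤ ‖a‖) (hb : c ≤ ‖b‖) :
    ‖‖a‖⁻¹ • a - ‖b‖⁻¹ • b‖ ≤ (2 / c) * ‖a - b‖ := by
  have ha0 : (0:ℝ) < ‖a‖ := lt_of_lt_of_le hc ha
  have hb0 : (0:ℝ) < ‖b‖ := lt_of_lt_of_le hc hb
  have h1 : ‖a‖⁻¹ • a - ‖b‖⁻¹ • b = ‖a‖⁻¹ • (a - b) + (‖a‖⁻¹ - ‖b‖⁻¹) • b := by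
    rw [smul_sub, sub_smul]; abel
  rw [h1]
  have h3 : |‖a‖⁻¹ - ‖b‖⁻¹| * ‖b‖ ≤ ‖a‖⁻¹ * ‖a - b‖ := by
    have hkey : ‖a‖⁻¹ - ‖b‖⁻¹ = (‖b‖ - ‖a‖) / (‖a‖ * ‖b‖) := by field_simp
    rw [hkey, abs_div, abs_of_pos (mul_pos ha0 hb0), div_mul_eq_mul_div,
      div_le_iff₀ (mul_pos ha0 hb0)]
    have hba : |‖b‖ - ‖a‖| ≤ ‖a - b‖ := by
      rw [← norm_sub_rev]; exact abs_norm_sub_norm_le b a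
    have hinv : ‖a‖⁻¹ * ‖a‖ = 1 := inv_mul_cancel₀ ha0.ne'
    rw [show ‖a‖⁻¹ * ‖a - b‖ * (‖a‖ * ‖b‖) = ‖a - b‖ * ‖b‖ by field_simp]
    exact mul_le_mul_of_nonneg_right hba hb0.le
  calc ‖‖a‖⁻¹ • (a - b) + (‖a‖⁻¹ - ‖b‖⁻¹) • b‖
      ≤ ‖‖a‖⁻¹ • (a - b)‖ + ‖(‖a‖⁻¹ - ‖b‖⁻¹) • b‖ := norm_add_le _ _
    _ ≤ ‖a‖⁻¹ * ‖a - b‖ + ‖a‖⁻¹ * ‖a - b‖ := by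
        rw [norm_smul (‖a‖⁻¹ - ‖b‖⁻¹) b, norm_smul, Real.norm_eq_abs, Real.norm_eq_abs,
          abs_of_pos (by positivity : (0:ℝ) < ‖a‖⁻¹)]
        exact add_le_add le_rfl h3
    _ = (2 * ‖a‖⁻¹) * ‖a - b‖ := by ring
    _ ≤ (2 / c) * ‖a - b‖ := by
        apply mul_le_mul_of_nonneg_right _ (norm_nonneg _)
        rw [div_eq_mul_inv]
        exact mul_le_mul_of_nonneg_left (inv_anti₀ hc ha) (by norm_num)

/-- The supremum of times `t ≥ 0` such that `p + t • u` stays in `Q`. -/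
def raySup (Q : Set E) (p u : E) : ℝ := sSup {t : ℝ | 0 ≤ t ∧ p + t • u ∈ Q}

section RaySup

variable {Q : Set E} {p u : E} {r : ℝ}

lemma raySup_bddAbove (hQc : IsCompact Q) (hpQ : p ∈ Q) (hu : ‖u‖ = 1) :
    BddAbove {t : ℝ | 0 ≤ t ∧ p + t • u ∈ Q} := by
  refine ⟨diam Q, fun t ht => ?_⟩
  have := dist_le_diam_of_mem hQc.isBounded ht.2 hpQ
  rwa [dist_eq_norm, add_sub_cancel_left, norm_smul, hu, Real.norm_eq_abs,
    abs_of_nonneg ht.1, mul_one] at this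

lemma raySup_spec (hQc : IsCompact Q) (hQconv : Convex ℝ Q) (hr : 0 < r)
    (hball : closedBall p r ⊆ Q) (hu : ‖u‖ = 1) :
    r ≤ raySup Q p u ∧ raySup Q p u ≤ diam Q ∧ p + raySup Q p u • u ∈ frontier Q := by
  set T : Set ℝ := {t : ℝ | 0 ≤ t ∧ p + t • u ∈ Q} with hT
  have hpQ : p ∈ Q := hball (mem_closedBall_self hr.le)
  have hrT : r ∈ T := by
    refine ⟨hr.le, hball ?_⟩
    simp [mem_closedBall, dist_eq_norm, norm_smul, hu, abs_of_pos hr]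
  have hne : T.Nonempty := ⟨r, hrT⟩
  have hbdd : BddAbove T := raySup_bddAbove hQc hpQ hu
  have hclosed : IsClosed T := by
    have : T = Ici (0:ℝ) ∩ (fun t : ℝ => p + t • u) ⁻¹' Q := by
      ext t; simp [hT, mem_Ici]
    rw [this]
    exact isClosed_Ici.inter (hQc.isClosed.preimage (by continuity))
  have hmem : raySup Q p u ∈ T := hclosed.csSup_mem hne hbdd
  have hle : r ≤ raySup Q p u := le_csSup hbdd hrT
  have hdiam : raySup Q p u ≤ diam Q := csSup_le hne fun t ht => by
    have := dist_le_diam_of_mem hQc.isBounded ht.2 hpQ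
    rwa [dist_eq_norm, add_sub_cancel_left, norm_smul, hu, Real.norm_eq_abs,
      abs_of_nonneg ht.1, mul_one] at this
  have hnotint : p + raySup Q p u • u ∉ interior Q := by
    intro hint
    rw [mem_interior_iff_mem_nhds, Metric.mem_nhds_iff] at hint
    obtain ⟨δ, hδ, hδsub⟩ := hint
    have hmem2 : raySup Q p u + δ/2 ∈ T := by
      refine ⟨by linarith, hδsub ?_⟩
      simp only [mem_ball, dist_eq_norm]
      have heq : p + (raySup Q p u + δ/2) • u - (p + raySup Q p u • u) = (δ/2) • u := by
        rw [add_smul]; abel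
      rw [heq, norm_smul, hu, Real.norm_eq_abs, abs_of_pos (by positivity), mul_one]
      linarith
    have h5 : raySup Q p u + δ/2 ≤ raySup Q p u := le_csSup hbdd hmem2
    linarith
  exact ⟨hle, hdiam, ⟨subset_closure hmem.2, hnotint⟩⟩

lemma raySup_unique (hQc : IsCompact Q) (hQconv : Convex ℝ Q) (hr : 0 < r)
    (hball : closedBall p r ⊆ Q) (hu : ‖u‖ = 1) {t : ℝ} (ht : 0 ≤ t)
    (htf : p + t • u ∈ frontier Q) : t = raySup Q p u := by
  obtain ⟨h1, h2, h3⟩ := raySup_spec hQc hQconv hr hball hu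
  have hσ : 0 < raySup Q p u := lt_of_lt_of_le hr h1
  have hpint : p ∈ interior Q :=
    interior_maximal (ball_subset_closedBall.trans hball) isOpen_ball (mem_ball_self hr)
  have hfi : p + t • u ∉ interior Q := htf.2
  have htT : t ≤ raySup Q p u :=
    le_csSup (raySup_bddAbove hQc (hball (mem_closedBall_self hr.le)) hu)
      ⟨ht, hQc.isClosed.frontier_subset htf⟩
  rcases eq_or_lt_of_le htT with h | h
  · exact h
  exfalso
  rcases eq_or_lt_of_le ht with h0 | h0
  · apply hfi; rw [← h0]; simpa using hpint
  have hseg : p + t • u ∈ openSegment ℝ p (p + raySup Q p u • u) := by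
    refine ⟨1 - t / raySup Q p u, t / raySup Q p u, ?_, by positivity, by ring, ?_⟩
    · have : t / raySup Q p u < 1 := (div_lt_one hσ).2 h
      linarith
    · have h9 : t / raySup Q p u * raySup Q p u = t := div_mul_cancel₀ _ hσ.ne'
      rw [smul_add, smul_smul, h9, ← add_assoc, ← add_smul, sub_add_cancel, one_smul]
  exact hfi (hQconv.openSegment_interior_self_subset_interior hpint
    (hQc.isClosed.frontier_subset h3) hseg)

end RaySup
section RayLip

variable {Q : Set E} {p : E} {r : ℝ}

/-- Supporting functional at a frontier point of a convex body. -/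
lemma stmt6_support (hQconv : Convex ℝ Q) (hQint : (interior Q).Nonempty)
    {q : E} (hq : q ∈ frontier Q) :
    ∃ ν : E, ‖ν‖ = 1 ∧ ∀ w ∈ Q, ⟪w - q, ν⟫ ≤ 0 := by
  obtain ⟨a, ha⟩ := hQint
  have hqni : q ∉ interior Q := hq.2
  obtain ⟨f, hf⟩ := geometric_hahn_banach_open_point (hQconv.interior) isOpen_interior hqni
  have hfa : f a < f q := hf a ha
  have hQle : ∀ w ∈ Q, f w ≤ f q := by
    intro w hw
    by_contra hcon
    push_neg at hcon
    -- pick θ ∈ (0,1) with (1-θ) f a + θ f w > f q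
    have hwa : 0 < f w - f a := by linarith
    set θ : ℝ := (f q - f a + (f w - f q) / 2) / (f w - f a) with hθ
    have hθ0 : 0 < θ := by apply div_pos; linarith; linarith
    have hθ1 : θ < 1 := by
      rw [div_lt_one hwa]; linarith
    have hz : (1 - θ) • a + θ • w ∈ openSegment ℝ a w :=
      ⟨1 - θ, θ, by linarith, hθ0, by ring, rfl⟩
    have hzi : (1 - θ) • a + θ • w ∈ interior Q :=
      hQconv.openSegment_interior_self_subset_interior ha hw hz
    have := hf _ hzi
    rw [map_add, _root_.map_smul, _root_.map_smul] at this
    simp only [smul_eq_mul] at this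
    have hθval : (1 - θ) * f a + θ * f w = f q + (f w - f q) / 2 := by
      have : θ * (f w - f a) = f q - f a + (f w - f q) / 2 := by
        rw [hθ]; field_simp
      nlinarith [this]
    rw [hθval] at this
    linarith
  set ν' : E := (InnerProductSpace.toDual ℝ E).symm f with hν'
  have hν'app : ∀ x : E, ⟪x, ν'⟫ = f x := by
    intro x
    rw [real_inner_comm]
    exact InnerProductSpace.toDual_symm_apply
  have hν'0 : ν' ≠ 0 := by
    intro h0
    have := hν'app (q - a)
    rw [h0, inner_zero_right, map_sub] at this
    have : f q - f a = 0 := by linarith [this]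
    linarith
  refine ⟨‖ν'‖⁻¹ • ν', norm_smul_inv_norm hν'0, fun w hw => ?_⟩
  rw [real_inner_smul_right]
  have : ⟪w - q, ν'⟫ ≤ 0 := by
    rw [hν'app, map_sub]
    linarith [hQle w hw]
  have hpos : (0:ℝ) < ‖ν'‖⁻¹ := by
    rw [inv_pos]; exact norm_pos_iff.2 hν'0
  nlinarith

/-- Lipschitz estimate for the radial function of a convex body. -/
lemma raySup_lip (hQc : IsCompact Q) (hQconv : Convex ℝ Q) (hr : 0 < r)
    (hball : closedBall p r ⊆ Q) {u₁ u₂ : E} (hu₁ : ‖u₁‖ = 1) (hu₂ : ‖u₂‖ = 1) :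
    raySup Q p u₁ - raySup Q p u₂ ≤ (diam Q ^ 2 / r) * ‖u₁ - u₂‖ := by
  set D := diam Q with hD
  obtain ⟨h1r, h1D, h1f⟩ := raySup_spec hQc hQconv hr hball hu₁
  obtain ⟨h2r, h2D, h2f⟩ := raySup_spec hQc hQconv hr hball hu₂
  set σ₁ := raySup Q p u₁
  set σ₂ := raySup Q p u₂
  have hσ₂ : 0 < σ₂ := lt_of_lt_of_le hr h2r
  have hD0 : 0 < D := lt_of_lt_of_le hr (h2r.trans h2D)
  have hQint : (interior Q).Nonempty :=
    ⟨p, interior_maximal (ball_subset_closedBall.trans hball) isOpen_ball (mem_ball_self hr)⟩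
  obtain ⟨ν, hν1, hνsupp⟩ := stmt6_support hQconv hQint h2f
  -- ⟪p - q, ν⟫ ≤ -r  where q = p + σ₂ u₂
  have hpause : p + r • ν ∈ Q := by
    apply hball
    simp [mem_closedBall, dist_eq_norm, norm_smul, hν1, abs_of_pos hr]
  have hkey1 : ⟪(p + r • ν) - (p + σ₂ • u₂), ν⟫ ≤ 0 := hνsupp _ hpause
  have hexp1 : ⟪(p + r • ν) - (p + σ₂ • u₂), ν⟫ = r - σ₂ * ⟪u₂, ν⟫ := by
    have : (p + r • ν) - (p + σ₂ • u₂) = r • ν - σ₂ • u₂ := by abel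
    rw [this, inner_sub_left, real_inner_smul_left, real_inner_smul_left,
      real_inner_self_eq_norm_sq, hν1]
    ring
  have hu₂ν : r / σ₂ ≤ ⟪u₂, ν⟫ := by
    rw [div_le_iff₀ hσ₂]
    nlinarith [hkey1, hexp1]
  have hu₂ν' : r / D ≤ ⟪u₂, ν⟫ := by
    refine le_trans ?_ hu₂ν
    apply div_le_div_of_nonneg_left hr.le hσ₂ h2D
  have hkey2 : ⟪(p + σ₁ • u₁) - (p + σ₂ • u₂), ν⟫ ≤ 0 :=
    hνsupp _ (hQc.isClosed.frontier_subset h1f)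
  have hexp2 : ⟪(p + σ₁ • u₁) - (p + σ₂ • u₂), ν⟫
      = σ₁ * ⟪u₁ - u₂, ν⟫ + (σ₁ - σ₂) * ⟪u₂, ν⟫ := by
    have : (p + σ₁ • u₁) - (p + σ₂ • u₂) = σ₁ • (u₁ - u₂) + (σ₁ - σ₂) • u₂ := by
      rw [smul_sub, sub_smul]; abel
    rw [this, inner_add_left, real_inner_smul_left, real_inner_smul_left]
  have hCS : ⟪u₂ - u₁, ν⟫ ≤ ‖u₁ - u₂‖ := by
    calc ⟪u₂ - u₁, ν⟫ ≤ ‖u₂ - u₁‖ * ‖ν‖ := real_inner_le_norm _ _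
      _ = ‖u₁ - u₂‖ := by rw [hν1, norm_sub_rev]; ring
  -- combine
  rcases le_or_gt (σ₁ - σ₂) 0 with hsign | hsign
  · have : (0:ℝ) ≤ D ^ 2 / r * ‖u₁ - u₂‖ := by positivity
    linarith
  have hstep : (σ₁ - σ₂) * (r / D) ≤ σ₁ * ‖u₁ - u₂‖ := by
    have h6 : (σ₁ - σ₂) * ⟪u₂, ν⟫ ≤ σ₁ * ⟪u₂ - u₁, ν⟫ := by
      have := hkey2
      rw [hexp2] at this
      have h7 : ⟪u₂ - u₁, ν⟫ = - ⟪u₁ - u₂, ν⟫ := by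
        rw [← inner_neg_left]; congr 1; abel
      nlinarith [this]
    calc (σ₁ - σ₂) * (r / D) ≤ (σ₁ - σ₂) * ⟪u₂, ν⟫ := by
          exact mul_le_mul_of_nonneg_left hu₂ν' hsign.le
      _ ≤ σ₁ * ⟪u₂ - u₁, ν⟫ := h6
      _ ≤ σ₁ * ‖u₁ - u₂‖ := by
          apply mul_le_mul_of_nonneg_left hCS (le_trans hr.le h1r)
  have hrD : 0 < r / D := by positivity
  rw [← sub_nonneg]
  have hσ₁D : σ₁ ≤ D := h1D
  have : (σ₁ - σ₂) ≤ σ₁ * ‖u₁ - u₂‖ * (D / r) := by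
    have h10 : (σ₁ - σ₂) ≤ σ₁ * ‖u₁ - u₂‖ / (r / D) := by
      rw [le_div_iff₀ hrD]; exact hstep
    calc σ₁ - σ₂ ≤ σ₁ * ‖u₁ - u₂‖ / (r / D) := h10
      _ = σ₁ * ‖u₁ - u₂‖ * (D / r) := by
          rw [div_div_eq_mul_div, mul_div_assoc]
  have h8 : σ₁ * ‖u₁ - u₂‖ * (D / r) ≤ D * ‖u₁ - u₂‖ * (D / r) := by
    have := norm_nonneg (u₁ - u₂)
    apply mul_le_mul_of_nonneg_right _ (by positivity)
    exact mul_le_mul_of_nonneg_right hσ₁D this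
  have h9 : D * ‖u₁ - u₂‖ * (D / r) = D ^ 2 / r * ‖u₁ - u₂‖ := by ring
  linarith

end RayLip

/-- Radial projection onto the frontier of `Q`, from center `p`. -/
def rayMap (Q : Set E) (p y : E) : E :=
  p + raySup Q p (‖y - p‖⁻¹ • (y - p)) • (‖y - p‖⁻¹ • (y - p))

section RayMap

variable {Q : Set E} {p : E} {r : ℝ}

lemma rayMap_unit {y : E} (hy : y ≠ p) : ‖‖y - p‖⁻¹ • (y - p)‖ = 1 :=
  norm_smul_inv_norm (sub_ne_zero.2 hy)

lemma rayMap_mem_frontier (hQc : IsCompact Q) (hQconv : Convex ℝ Q) (hr : 0 < r)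
    (hball : closedBall p r ⊆ Q) {y : E} (hy : y ≠ p) :
    rayMap Q p y ∈ frontier Q :=
  (raySup_spec hQc hQconv hr hball (rayMap_unit hy)).2.2

lemma rayMap_eq_self (hQc : IsCompact Q) (hQconv : Convex ℝ Q) (hr : 0 < r)
    (hball : closedBall p r ⊆ Q) {y : E} (hy : y ∈ frontier Q) :
    rayMap Q p y = y := by
  have hpi : p ∈ interior Q :=
    interior_maximal (ball_subset_closedBall.trans hball) isOpen_ball (mem_ball_self hr)
  have hyp : y ≠ p := by rintro rfl; exact hy.2 hpi
  have hnorm : (0:ℝ) < ‖y - p‖ := by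
    rw [norm_pos_iff, sub_ne_zero]; exact hyp
  have hyeq : p + ‖y - p‖ • (‖y - p‖⁻¹ • (y - p)) = y := by
    rw [smul_smul, mul_inv_cancel₀ hnorm.ne', one_smul]; abel
  have := raySup_unique hQc hQconv hr hball (rayMap_unit hyp) hnorm.le (by rw [hyeq]; exact hy)
  rw [rayMap, ← this, hyeq]

/-- If the ray direction is given by a point at distance `≥ c` from `p`, the radial
projection is Lipschitz. -/
lemma rayMap_lip (hQc : IsCompact Q) (hQconv : Convex ℝ Q) (hr : 0 < r)
    (hball : closedBall p r ⊆ Q) {c : ℝ} (hc : 0 < c) {y₁ y₂ : E}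
    (h1 : c ≤ ‖y₁ - p‖) (h2 : c ≤ ‖y₂ - p‖) :
    ‖rayMap Q p y₁ - rayMap Q p y₂‖
      ≤ ((diam Q + diam Q ^ 2 / r) * (2 / c)) * ‖y₁ - y₂‖ := by
  set D := diam Q with hD
  have hy₁ : y₁ ≠ p := by
    intro h; rw [h] at h1; simp at h1; linarith
  have hy₂ : y₂ ≠ p := by
    intro h; rw [h] at h2; simp at h2; linarith
  set u₁ := ‖y₁ - p‖⁻¹ • (y₁ - p) with hu₁d
  set u₂ := ‖y₂ - p‖⁻¹ • (y₂ - p) with hu₂d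
  have hu₁ : ‖u₁‖ = 1 := rayMap_unit hy₁
  have hu₂ : ‖u₂‖ = 1 := rayMap_unit hy₂
  set σ₁ := raySup Q p u₁
  set σ₂ := raySup Q p u₂
  obtain ⟨h1r, h1D, _⟩ := raySup_spec hQc hQconv hr hball hu₁
  obtain ⟨h2r, h2D, _⟩ := raySup_spec hQc hQconv hr hball hu₂
  have hDpos : 0 < D := lt_of_lt_of_le hr (h1r.trans h1D)
  have hulip : ‖u₁ - u₂‖ ≤ (2 / c) * ‖y₁ - y₂‖ := by
    have := stmt6_unit_lip hc h1 h2
    rw [← hu₁d, ← hu₂d] at this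
    have heq : (y₁ - p) - (y₂ - p) = y₁ - y₂ := by abel
    rwa [heq] at this
  have hσlip : |σ₁ - σ₂| ≤ (D ^ 2 / r) * ‖u₁ - u₂‖ := by
    rw [abs_sub_le_iff]
    constructor
    · exact raySup_lip hQc hQconv hr hball hu₁ hu₂
    · rw [norm_sub_rev]
      exact raySup_lip hQc hQconv hr hball hu₂ hu₁
  have hmain : ‖rayMap Q p y₁ - rayMap Q p y₂‖ = ‖σ₁ • u₁ - σ₂ • u₂‖ := by
    rw [rayMap, rayMap]
    congr 1
    abel
  rw [hmain]
  have hsplit : σ₁ • u₁ - σ₂ • u₂ = σ₁ • (u₁ - u₂) + (σ₁ - σ₂) • u₂ := by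
    rw [smul_sub, sub_smul]; abel
  rw [hsplit]
  calc ‖σ₁ • (u₁ - u₂) + (σ₁ - σ₂) • u₂‖
      ≤ ‖σ₁ • (u₁ - u₂)‖ + ‖(σ₁ - σ₂) • u₂‖ := norm_add_le _ _
    _ = |σ₁| * ‖u₁ - u₂‖ + |σ₁ - σ₂| * ‖u₂‖ := by
        rw [norm_smul, norm_smul, Real.norm_eq_abs, Real.norm_eq_abs]
    _ ≤ D * ‖u₁ - u₂‖ + (D ^ 2 / r) * ‖u₁ - u₂‖ := by
        rw [hu₂, mul_one]
        refine add_le_add (mul_le_mul_of_nonneg_right ?_ (norm_nonneg _)) hσlip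
        rw [abs_of_nonneg (le_trans hr.le h1r)]
        exact h1D
    _ = (D + D ^ 2 / r) * ‖u₁ - u₂‖ := by ring
    _ ≤ (D + D ^ 2 / r) * ((2 / c) * ‖y₁ - y₂‖) := by
        apply mul_le_mul_of_nonneg_left hulip
        positivity
    _ = ((D + D ^ 2 / r) * (2 / c)) * ‖y₁ - y₂‖ := by ring

end RayMap

section EuclHausdorff

/-- Hausdorff measure `μH[n]` of a bounded subset of `EuclideanSpace ℝ (Fin n)` is finite. -/
lemma stmt6_hd_bounded_lt_top (n : ℕ) {s : Set (EuclideanSpace ℝ (Fin n))}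
    (hs : Bornology.IsBounded s) : μH[(n:ℝ)] s < ⊤ := by
  set e := WithLp.equiv 2 (Fin n → ℝ) with he
  have hlip : LipschitzWith 1 e := PiLp.lipschitzWith_ofLp 2 _
  have halip : AntilipschitzWith ((Fintype.card (Fin n) : ℝ≥0) ^ ((1:ℝ≥0∞)/2).toReal) e :=
    PiLp.antilipschitzWith_ofLp 2 _
  have hsymm : LipschitzWith ((Fintype.card (Fin n) : ℝ≥0) ^ ((1:ℝ≥0∞)/2).toReal) e.symm :=
    halip.to_rightInverse e.apply_symm_apply
  have hn : (0:ℝ) ≤ (n:ℝ) := Nat.cast_nonneg n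
  have h1 : s = e.symm '' (e '' s) := by
    rw [Equiv.symm_image_image]
  have h2 : μH[(n:ℝ)] s ≤ ((((Fintype.card (Fin n) : ℝ≥0) ^ ((1:ℝ≥0∞)/2).toReal : ℝ≥0)) : ℝ≥0∞) ^ (n:ℝ)
      * μH[(n:ℝ)] (e '' s) := by
    conv_lhs => rw [h1]
    exact hsymm.hausdorffMeasure_image_le hn (e '' s)
  have h3 : (μH[(n:ℝ)] : Measure (Fin n → ℝ)) = volume := by
    have := MeasureTheory.hausdorffMeasure_pi_real (ι := Fin n)
    rwa [Fintype.card_fin] at this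
  have h4 : Bornology.IsBounded (e '' s) := hlip.isBounded_image hs
  obtain ⟨R, hR⟩ := h4.subset_closedBall 0
  have h5 : μH[(n:ℝ)] (e '' s) < ⊤ := by
    rw [h3]
    exact lt_of_le_of_lt (measure_mono hR) (isCompact_closedBall 0 R).measure_lt_top
  have hfin : ((((Fintype.card (Fin n) : ℝ≥0) ^ ((1:ℝ≥0∞)/2).toReal : ℝ≥0)) : ℝ≥0∞) ^ (n:ℝ) < ⊤ :=
    ENNReal.rpow_lt_top_of_nonneg hn ENNReal.coe_ne_top
  exact lt_of_le_of_lt h2 (ENNReal.mul_lt_top hfin h5)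

/-- Hausdorff measure `μH[n]` of a ball in `EuclideanSpace ℝ (Fin n)` is positive. -/
lemma stmt6_hd_ball_pos (n : ℕ) (z : EuclideanSpace ℝ (Fin n)) {R : ℝ} (hR : 0 < R) :
    0 < μH[(n:ℝ)] (ball z R) := by
  set e := WithLp.equiv 2 (Fin n → ℝ) with he
  have hlip : LipschitzWith 1 e := PiLp.lipschitzWith_ofLp 2 _
  have hn : (0:ℝ) ≤ (n:ℝ) := Nat.cast_nonneg n
  have h3 : (μH[(n:ℝ)] : Measure (Fin n → ℝ)) = volume := by
    have := MeasureTheory.hausdorffMeasure_pi_real (ι := Fin n)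
    rwa [Fintype.card_fin] at this
  have h2 : μH[(n:ℝ)] (e '' ball z R) ≤ ((1:ℝ≥0) : ℝ≥0∞) ^ (n:ℝ) * μH[(n:ℝ)] (ball z R) :=
    hlip.hausdorffMeasure_image_le hn _
  have hopen : IsOpen (e '' ball z R) := by
    rw [Equiv.image_eq_preimage_symm]
    exact (PiLp.continuous_toLp 2 _).isOpen_preimage _ isOpen_ball
  have hne : (e '' ball z R).Nonempty := (nonempty_ball.2 hR).image e
  have hpos : 0 < μH[(n:ℝ)] (e '' ball z R) := by
    rw [h3]
    exact hopen.measure_pos volume hne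
  have := lt_of_lt_of_le hpos h2
  simpa using this

end EuclHausdorff

section FrontierMeasure

variable {Q : Set E} {p u : E}

/-- Variant of `raySup_spec` requiring only `p ∈ Q`. -/
lemma raySup_spec₀ (hQc : IsCompact Q) (hpQ : p ∈ Q) (hu : ‖u‖ = 1) :
    0 ≤ raySup Q p u ∧ p + raySup Q p u • u ∈ frontier Q := by
  set T : Set ℝ := {t : ℝ | 0 ≤ t ∧ p + t • u ∈ Q} with hT
  have h0T : (0:ℝ) ∈ T := ⟨le_refl _, by simpa using hpQ⟩
  have hne : T.Nonempty := ⟨0, h0T⟩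
  have hbdd : BddAbove T := raySup_bddAbove hQc hpQ hu
  have hclosed : IsClosed T := by
    have : T = Ici (0:ℝ) ∩ (fun t : ℝ => p + t • u) ⁻¹' Q := by
      ext t; simp [hT, mem_Ici]
    rw [this]
    exact isClosed_Ici.inter (hQc.isClosed.preimage (by continuity))
  have hmem : raySup Q p u ∈ T := hclosed.csSup_mem hne hbdd
  have hle : (0:ℝ) ≤ raySup Q p u := le_csSup hbdd h0T
  have hnotint : p + raySup Q p u • u ∉ interior Q := by
    intro hint
    rw [mem_interior_iff_mem_nhds, Metric.mem_nhds_iff] at hint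
    obtain ⟨δ, hδ, hδsub⟩ := hint
    have hmem2 : raySup Q p u + δ/2 ∈ T := by
      refine ⟨by linarith, hδsub ?_⟩
      simp only [mem_ball, dist_eq_norm]
      have heq : p + (raySup Q p u + δ/2) • u - (p + raySup Q p u • u) = (δ/2) • u := by
        rw [add_smul]; abel
      rw [heq, norm_smul, hu, Real.norm_eq_abs, abs_of_pos (by positivity), mul_one]
      linarith
    have h5 : raySup Q p u + δ/2 ≤ raySup Q p u := le_csSup hbdd hmem2
    linarith
  exact ⟨hle, ⟨subset_closure hmem.2, hnotint⟩⟩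

end FrontierMeasure

section Faces

variable {n : ℕ}

/-- Any bounded piece of a coordinate hyperplane has finite `n`-dimensional Hausdorff
measure in `EuclideanSpace ℝ (Fin (n+1))`. -/
lemma stmt6_face_lt_top (i : Fin (n+1)) (c B : ℝ) :
    μH[(n:ℝ)] ({y : EuclideanSpace ℝ (Fin (n+1)) | y i = c} ∩ closedBall 0 B) < ⊤ := by
  set ψ : EuclideanSpace ℝ (Fin n) → EuclideanSpace ℝ (Fin (n+1)) :=
    fun w => WithLp.toLp 2 (i.insertNth c w.ofLp) with hψ
  have hiso : Isometry ψ := by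
    apply Isometry.of_dist_eq
    intro w w'
    rw [EuclideanSpace.dist_eq, EuclideanSpace.dist_eq]
    congr 1
    rw [Fin.sum_univ_succAbove _ i]
    simp [hψ, Fin.insertNth_apply_same, Fin.insertNth_apply_succAbove]
  have hsub : {y : EuclideanSpace ℝ (Fin (n+1)) | y i = c} ∩ closedBall 0 B
      ⊆ ψ '' (closedBall 0 B) := by
    rintro y ⟨hyc, hyB⟩
    refine ⟨WithLp.toLp 2 (i.removeNth y.ofLp), ?_, ?_⟩
    · rw [mem_closedBall_zero_iff] at hyB ⊢
      rw [EuclideanSpace.norm_eq] at hyB ⊢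
      refine le_trans (Real.sqrt_le_sqrt ?_) hyB
      rw [Fin.sum_univ_succAbove (fun j => ‖y j‖ ^ 2) i]
      have : (0:ℝ) ≤ ‖y i‖ ^ 2 := sq_nonneg _
      simp only [Fin.removeNth]
      linarith
    · rw [hψ, ← hyc]
      exact congrArg (WithLp.toLp 2) (Fin.insertNth_self_removeNth i y.ofLp)
  calc μH[(n:ℝ)] ({y : EuclideanSpace ℝ (Fin (n+1)) | y i = c} ∩ closedBall 0 B)
      ≤ μH[(n:ℝ)] (ψ '' (closedBall 0 B)) := measure_mono hsub
    _ ≤ ((1:ℝ≥0) : ℝ≥0∞) ^ (n:ℝ) * μH[(n:ℝ)] (closedBall (0 : EuclideanSpace ℝ (Fin n)) B) :=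
        hiso.lipschitz.hausdorffMeasure_image_le (Nat.cast_nonneg n) _
    _ < ⊤ := by
        simp only [ENNReal.coe_one, ENNReal.one_rpow, one_mul]
        exact stmt6_hd_bounded_lt_top n isBounded_closedBall

end Faces

section FrontierBounds

variable {n : ℕ}

lemma stmt6_coord_le_norm (y : EuclideanSpace ℝ (Fin (n+1))) (j : Fin (n+1)) :
    |y j| ≤ ‖y‖ := by
  rw [EuclideanSpace.norm_eq]
  have h1 : |y j| = Real.sqrt (‖y j‖ ^ 2) := by
    rw [Real.sqrt_sq_eq_abs, Real.norm_eq_abs, abs_abs]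
  rw [h1]
  apply Real.sqrt_le_sqrt
  exact Finset.single_le_sum (fun k _ => sq_nonneg (‖y k‖)) (Finset.mem_univ j)

/-- The frontier of a convex body in `EuclideanSpace ℝ (Fin (n+1))` has finite
`n`-dimensional Hausdorff measure. -/
lemma stmt6_frontier_lt_top {Q : Set (EuclideanSpace ℝ (Fin (n+1)))}
    (hQc : IsCompact Q) (hQconv : Convex ℝ Q) {x₀ : EuclideanSpace ℝ (Fin (n+1))} {ρ : ℝ}
    (hρ : 0 < ρ) (hball : closedBall x₀ ρ ⊆ Q) :
    μH[(n:ℝ)] (frontier Q) < ⊤ := by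
  set D : ℝ := diam Q with hD
  have hx₀Q : x₀ ∈ Q := hball (mem_closedBall_self hρ.le)
  have hD0 : 0 < D := by
    have h1 : x₀ + ρ • EuclideanSpace.single 0 (1:ℝ) ∈ Q := by
      apply hball
      simp [mem_closedBall, dist_eq_norm, norm_smul, EuclideanSpace.norm_single,
        abs_of_pos hρ]
    have := dist_le_diam_of_mem hQc.isBounded h1 hx₀Q
    rw [dist_eq_norm, add_sub_cancel_left, norm_smul, EuclideanSpace.norm_single] at this
    simp only [norm_one, mul_one, Real.norm_eq_abs, abs_of_pos hρ] at this
    linarith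
  set a : ℝ := ‖x₀‖ + D + 1 with ha
  have ha0 : 0 < a := by positivity
  set B : ℝ := Real.sqrt ((n+1) * a^2) with hB
  set Cube : Set (EuclideanSpace ℝ (Fin (n+1))) := {y | ∀ j, |y j| ≤ a} with hCube
  have hCubeBall : ∀ y ∈ Cube, y ∈ closedBall 0 B := by
    intro y hy
    rw [mem_closedBall_zero_iff, EuclideanSpace.norm_eq]
    rw [hB]
    apply Real.sqrt_le_sqrt
    calc ∑ j, ‖y j‖ ^ 2 ≤ ∑ _j : Fin (n+1), a ^ 2 := by
          apply Finset.sum_le_sum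
          intro k _
          have := hy k
          rw [Real.norm_eq_abs]
          nlinarith [abs_nonneg (y k)]
      _ = (n+1) * a^2 := by
          rw [Finset.sum_const, Finset.card_univ, Fintype.card_fin]
          push_cast; ring
  have hCubeClosed : IsClosed Cube := by
    have : Cube = ⋂ j, (fun y : EuclideanSpace ℝ (Fin (n+1)) => y j) ⁻¹' (Icc (-a) a) := by
      ext y; simp [hCube, abs_le, mem_Icc]
    rw [this]
    refine isClosed_iInter fun j => IsClosed.preimage ?_ isClosed_Icc
    exact (continuous_apply j).comp (PiLp.continuous_ofLp 2 _)
  have hCubeCompact : IsCompact Cube := by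
    apply Metric.isCompact_of_isClosed_isBounded hCubeClosed
    exact isBounded_closedBall.subset (fun y hy => hCubeBall y hy)
  have hCubeConv : Convex ℝ Cube := by
    intro y hy z hz θ₁ θ₂ h1 h2 h3
    intro j
    have : (θ₁ • y + θ₂ • z) j = θ₁ * y j + θ₂ * z j := rfl
    rw [this]
    calc |θ₁ * y j + θ₂ * z j| ≤ |θ₁ * y j| + |θ₂ * z j| := abs_add_le _ _
      _ = θ₁ * |y j| + θ₂ * |z j| := by
          rw [abs_mul, abs_mul, abs_of_nonneg h1, abs_of_nonneg h2]
      _ ≤ θ₁ * a + θ₂ * a := by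
          exact add_le_add (mul_le_mul_of_nonneg_left (hy j) h1)
            (mul_le_mul_of_nonneg_left (hz j) h2)
      _ = a := by rw [← add_mul, h3, one_mul]
  have hBallCube : closedBall x₀ (D+1) ⊆ Cube := by
    intro y hy j
    rw [mem_closedBall, dist_eq_norm] at hy
    have h1 : |y j - x₀ j| ≤ D + 1 := by
      have := stmt6_coord_le_norm (y - x₀) j
      have h2 : (y - x₀) j = y j - x₀ j := rfl
      rw [h2] at this
      linarith
    have h3 : |x₀ j| ≤ ‖x₀‖ := stmt6_coord_le_norm x₀ j
    calc |y j| = |(y j - x₀ j) + x₀ j| := by ring_nf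
      _ ≤ |y j - x₀ j| + |x₀ j| := abs_add_le _ _
      _ ≤ (D+1) + ‖x₀‖ := add_le_add h1 h3
      _ = a := by rw [ha]; ring
  have hCubeFar : ∀ y ∈ frontier Cube, D + 1 ≤ ‖y - x₀‖ := by
    intro y hy
    have hyC : y ∈ Cube := hCubeClosed.frontier_subset hy
    have hyint : y ∉ interior Cube := hy.2
    have hU : ∃ j, |y j| = a := by
      by_contra hcon
      push_neg at hcon
      apply hyint
      have hUopen : IsOpen {z : EuclideanSpace ℝ (Fin (n+1)) | ∀ j, |z j| < a} := by
        have : {z : EuclideanSpace ℝ (Fin (n+1)) | ∀ j, |z j| < a}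
            = ⋂ j, (fun z : EuclideanSpace ℝ (Fin (n+1)) => z j) ⁻¹' (Ioo (-a) a) := by
          ext z; simp [abs_lt, mem_Ioo]
        rw [this]
        exact isOpen_iInter_of_finite fun j => IsOpen.preimage
          ((continuous_apply j).comp (PiLp.continuous_ofLp 2 _)) isOpen_Ioo
      have hsub : {z : EuclideanSpace ℝ (Fin (n+1)) | ∀ j, |z j| < a} ⊆ Cube :=
        fun z hz j => (hz j).le
      exact interior_maximal hsub hUopen (fun j => lt_of_le_of_ne (hyC j) (hcon j))
    obtain ⟨j, hj⟩ := hU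
    have h1 : |y j - x₀ j| ≥ a - ‖x₀‖ := by
      have h3 : |x₀ j| ≤ ‖x₀‖ := stmt6_coord_le_norm x₀ j
      have := abs_sub_abs_le_abs_sub (y j) (x₀ j)
      rw [hj] at this
      linarith
    have h2 : |y j - x₀ j| ≤ ‖y - x₀‖ := by
      have := stmt6_coord_le_norm (y - x₀) j
      have heq : (y - x₀) j = y j - x₀ j := rfl
      rwa [heq] at this
    rw [ha] at h1
    linarith
  -- the frontier of the cube has finite measure
  have hCubeFrontier : μH[(n:ℝ)] (frontier Cube) < ⊤ := by
    have hsub : frontier Cube ⊆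
        ⋃ j : Fin (n+1), (({y : EuclideanSpace ℝ (Fin (n+1)) | y j = a} ∩ closedBall 0 B)
          ∪ ({y : EuclideanSpace ℝ (Fin (n+1)) | y j = -a} ∩ closedBall 0 B)) := by
      intro y hy
      have hyC : y ∈ Cube := hCubeClosed.frontier_subset hy
      have hyB : y ∈ closedBall 0 B := hCubeBall y hyC
      have hyint : y ∉ interior Cube := hy.2
      have hU : ∃ j, |y j| = a := by
        by_contra hcon
        push_neg at hcon
        apply hyint
        have hUopen : IsOpen {z : EuclideanSpace ℝ (Fin (n+1)) | ∀ j, |z j| < a} := by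
          have : {z : EuclideanSpace ℝ (Fin (n+1)) | ∀ j, |z j| < a}
              = ⋂ j, (fun z : EuclideanSpace ℝ (Fin (n+1)) => z j) ⁻¹' (Ioo (-a) a) := by
            ext z; simp [abs_lt, mem_Ioo]
          rw [this]
          exact isOpen_iInter_of_finite fun j => IsOpen.preimage
            ((continuous_apply j).comp (PiLp.continuous_ofLp 2 _)) isOpen_Ioo
        have hsub' : {z : EuclideanSpace ℝ (Fin (n+1)) | ∀ j, |z j| < a} ⊆ Cube :=
          fun z hz j => (hz j).le
        exact interior_maximal hsub' hUopen (fun j => lt_of_le_of_ne (hyC j) (hcon j))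
      obtain ⟨j, hj⟩ := hU
      rw [abs_eq ha0.le] at hj
      refine mem_iUnion.2 ⟨j, ?_⟩
      rcases hj with hj | hj
      · exact Or.inl ⟨hj, hyB⟩
      · exact Or.inr ⟨hj, hyB⟩
    calc μH[(n:ℝ)] (frontier Cube) ≤ ∑ j : Fin (n+1),
          μH[(n:ℝ)] (({y : EuclideanSpace ℝ (Fin (n+1)) | y j = a} ∩ closedBall 0 B)
            ∪ ({y : EuclideanSpace ℝ (Fin (n+1)) | y j = -a} ∩ closedBall 0 B)) :=
          le_trans (measure_mono hsub) (measure_iUnion_fintype_le _ _)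
      _ < ⊤ := by
          apply ENNReal.sum_lt_top.2
          intro j _
          exact lt_of_le_of_lt (measure_union_le _ _)
            (ENNReal.add_lt_top.2 ⟨stmt6_face_lt_top j a B, stmt6_face_lt_top j (-a) B⟩)
  -- now map the cube frontier onto the frontier of Q
  have hx₀int : x₀ ∈ interior Q :=
    interior_maximal (ball_subset_closedBall.trans hball) isOpen_ball (mem_ball_self hρ)
  set Kr : ℝ := (D + D^2/ρ) * (2/(D+1)) with hKr
  have hKr0 : 0 ≤ Kr := by positivity
  have hlip : LipschitzOnWith (Real.toNNReal Kr) (rayMap Q x₀) (frontier Cube) := by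
    apply LipschitzOnWith.of_dist_le_mul
    intro y₁ h₁ y₂ h₂
    rw [dist_eq_norm, dist_eq_norm]
    have := rayMap_lip hQc hQconv hρ hball (by linarith : (0:ℝ) < D + 1)
      (hCubeFar y₁ h₁) (hCubeFar y₂ h₂)
    rwa [Real.coe_toNNReal _ hKr0]
  have hsurj : frontier Q ⊆ rayMap Q x₀ '' (frontier Cube) := by
    intro y hy
    have hyx₀ : y ≠ x₀ := by rintro rfl; exact hy.2 hx₀int
    have hnorm : (0:ℝ) < ‖y - x₀‖ := by rw [norm_pos_iff, sub_ne_zero]; exact hyx₀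
    set u : EuclideanSpace ℝ (Fin (n+1)) := ‖y - x₀‖⁻¹ • (y - x₀) with hu
    have huu : ‖u‖ = 1 := norm_smul_inv_norm (sub_ne_zero.2 hyx₀)
    obtain ⟨hc1, hc2, hc3⟩ := raySup_spec hCubeCompact hCubeConv
      (by linarith : (0:ℝ) < D + 1) hBallCube huu
    set σc : ℝ := raySup Cube x₀ u with hσc
    have hσc0 : 0 < σc := lt_of_lt_of_le (by linarith) hc1
    refine ⟨x₀ + σc • u, hc3, ?_⟩
    have hz : (x₀ + σc • u) - x₀ = σc • u := by abel
    have hznorm : ‖(x₀ + σc • u) - x₀‖ = σc := by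
      rw [hz, norm_smul, huu, Real.norm_eq_abs, abs_of_pos hσc0, mul_one]
    have hdir : ‖(x₀ + σc • u) - x₀‖⁻¹ • ((x₀ + σc • u) - x₀) = u := by
      rw [hznorm, hz, smul_smul, inv_mul_cancel₀ hσc0.ne', one_smul]
    rw [rayMap, hdir]
    have hray : raySup Q x₀ u = ‖y - x₀‖ := by
      refine (raySup_unique hQc hQconv hρ hball huu hnorm.le ?_).symm
      have : x₀ + ‖y - x₀‖ • u = y := by
        rw [hu, smul_smul, mul_inv_cancel₀ hnorm.ne', one_smul]; abel
      rwa [this]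
    rw [hray, hu, smul_smul, mul_inv_cancel₀ hnorm.ne', one_smul]
    abel
  calc μH[(n:ℝ)] (frontier Q) ≤ μH[(n:ℝ)] (rayMap Q x₀ '' (frontier Cube)) :=
        measure_mono hsurj
    _ ≤ ((Real.toNNReal Kr : ℝ≥0) : ℝ≥0∞) ^ (n:ℝ) * μH[(n:ℝ)] (frontier Cube) :=
        hlip.hausdorffMeasure_image_le (Nat.cast_nonneg n)
    _ < ⊤ := ENNReal.mul_lt_top
        (ENNReal.rpow_lt_top_of_nonneg (Nat.cast_nonneg n) ENNReal.coe_ne_top) hCubeFrontier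

/-- The frontier of a convex body in `EuclideanSpace ℝ (Fin (n+1))` has positive
`n`-dimensional Hausdorff measure. -/
lemma stmt6_frontier_pos {Q : Set (EuclideanSpace ℝ (Fin (n+1)))}
    (hQc : IsCompact Q) {x₀ : EuclideanSpace ℝ (Fin (n+1))} {ρ : ℝ}
    (hρ : 0 < ρ) (hball : closedBall x₀ ρ ⊆ Q) :
    0 < μH[(n:ℝ)] (frontier Q) := by
  set π : EuclideanSpace ℝ (Fin (n+1)) → EuclideanSpace ℝ (Fin n) :=
    fun y => WithLp.toLp 2 (fun k => y (Fin.castSucc k)) with hπ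
  have hπlip : LipschitzWith 1 π := by
    apply LipschitzWith.of_dist_le_mul
    intro y y'
    rw [NNReal.coe_one, one_mul, EuclideanSpace.dist_eq, EuclideanSpace.dist_eq]
    apply Real.sqrt_le_sqrt
    rw [Fin.sum_univ_castSucc (f := fun j => dist (y j) (y' j) ^ 2)]
    have : (0:ℝ) ≤ dist (y (Fin.last n)) (y' (Fin.last n)) ^ 2 := sq_nonneg _
    have heq : ∀ k : Fin n, dist (π y k) (π y' k) = dist (y k.castSucc) (y' k.castSucc) :=
      fun k => rfl
    simp only [heq]
    linarith
  have hsub : ball (π x₀) ρ ⊆ π '' (frontier Q) := by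
    intro f hf
    set yf : EuclideanSpace ℝ (Fin (n+1)) :=
      WithLp.toLp 2 (fun j => Fin.lastCases (motive := fun _ => ℝ) (x₀ (Fin.last n)) (fun k => f k) j) with hyf
    have hπyf : π yf = f := by
      ext k
      show (Fin.lastCases (motive := fun _ => ℝ) (x₀ (Fin.last n)) (fun k => f k) k.castSucc : ℝ) = f k
      rw [Fin.lastCases_castSucc]
    have hyfball : yf ∈ ball x₀ ρ := by
      rw [mem_ball, EuclideanSpace.dist_eq]
      rw [mem_ball, EuclideanSpace.dist_eq] at hf
      have hsum : ∑ j, dist (yf j) (x₀ j) ^ 2 = ∑ k, dist (f k) (π x₀ k) ^ 2 := by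
        rw [Fin.sum_univ_castSucc (f := fun j => dist (yf j) (x₀ j) ^ 2)]
        have h1 : dist (yf (Fin.last n)) (x₀ (Fin.last n)) = 0 := by
          show dist (Fin.lastCases (motive := fun _ => ℝ) (x₀ (Fin.last n)) (fun k => f k) (Fin.last n)) _ = 0
          rw [Fin.lastCases_last, dist_self]
        have h2 : ∀ k : Fin n, dist (yf k.castSucc) (x₀ k.castSucc) = dist (f k) (π x₀ k) := by
          intro k
          show dist (Fin.lastCases (motive := fun _ => ℝ) (x₀ (Fin.last n)) (fun k => f k) k.castSucc) _ = _
          rw [Fin.lastCases_castSucc]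
        simp only [h2, h1]
        ring
      rw [hsum]
      exact hf
    have hyfQ : yf ∈ Q := hball (ball_subset_closedBall hyfball)
    set eL : EuclideanSpace ℝ (Fin (n+1)) := EuclideanSpace.single (Fin.last n) (1:ℝ) with heL
    have heLnorm : ‖eL‖ = 1 := by rw [heL, EuclideanSpace.norm_single, norm_one]
    obtain ⟨ht0, htf⟩ := raySup_spec₀ hQc hyfQ heLnorm
    refine ⟨yf + raySup Q yf eL • eL, htf, ?_⟩
    ext k
    show (yf + raySup Q yf eL • eL) k.castSucc = f k
    have h1 : (yf + raySup Q yf eL • eL) k.castSucc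
        = yf k.castSucc + raySup Q yf eL * eL k.castSucc := rfl
    have h2 : eL k.castSucc = 0 := by
      rw [heL, EuclideanSpace.single_apply, if_neg (Fin.castSucc_lt_last k).ne]
    rw [h1, h2, mul_zero, add_zero]
    show (Fin.lastCases (motive := fun _ => ℝ) (x₀ (Fin.last n)) (fun k => f k) k.castSucc : ℝ) = f k
    rw [Fin.lastCases_castSucc]
  have h1 : 0 < μH[(n:ℝ)] (ball (π x₀) ρ) := stmt6_hd_ball_pos n (π x₀) hρ
  have h2 : μH[(n:ℝ)] (ball (π x₀) ρ) ≤ μH[(n:ℝ)] (π '' (frontier Q)) := measure_mono hsub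
  have h3 : μH[(n:ℝ)] (π '' (frontier Q)) ≤ ((1:ℝ≥0) : ℝ≥0∞) ^ (n:ℝ) * μH[(n:ℝ)] (frontier Q) :=
    hπlip.hausdorffMeasure_image_le (Nat.cast_nonneg n) _
  have h4 := lt_of_lt_of_le h1 (le_trans h2 h3)
  simpa using h4

end FrontierBounds


section BallIn

variable {Q : Set E} {x : E} {ε : ℝ}

/-- A point of `Q` at distance `≥ ε` from the frontier has the closed `ε`-ball inside `Q`. -/
lemma stmt6_ball_subset (hQc : IsCompact Q) (hε : 0 < ε) (hxQ : x ∈ Q)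
    (hxd : ε ≤ infDist x (frontier Q)) : closedBall x ε ⊆ Q := by
  have hball' : ball x ε ⊆ Q := by
    intro z hz
    by_contra hzQ
    have hzx : z ≠ x := by rintro rfl; exact hzQ hxQ
    have hnz : (0:ℝ) < ‖z - x‖ := by rw [norm_pos_iff, sub_ne_zero]; exact hzx
    set u : E := ‖z - x‖⁻¹ • (z - x) with hu
    have huu : ‖u‖ = 1 := norm_smul_inv_norm (sub_ne_zero.2 hzx)
    set tz : ℝ := ‖z - x‖ with htz
    set T : Set ℝ := {t | t ∈ Icc 0 tz ∧ x + t • u ∈ Q} with hT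
    have h0T : (0:ℝ) ∈ T := ⟨⟨le_refl _, hnz.le⟩, by simpa using hxQ⟩
    have hTne : T.Nonempty := ⟨0, h0T⟩
    have hTbdd : BddAbove T := ⟨tz, fun t ht => ht.1.2⟩
    have hTclosed : IsClosed T := by
      have : T = Icc 0 tz ∩ (fun t : ℝ => x + t • u) ⁻¹' Q := by ext t; simp [hT]
      rw [this]
      exact isClosed_Icc.inter (hQc.isClosed.preimage (by continuity))
    set t₀ : ℝ := sSup T with ht₀
    have ht₀T : t₀ ∈ T := hTclosed.csSup_mem hTne hTbdd
    have ht₀tz : t₀ < tz := by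
      rcases eq_or_lt_of_le ht₀T.1.2 with h | h
      · exfalso
        apply hzQ
        have : x + tz • u = z := by
          rw [hu, htz, smul_smul, mul_inv_cancel₀ hnz.ne', one_smul]; abel
        rw [← this, ← h]
        exact ht₀T.2
      · exact h
    have hfr : x + t₀ • u ∈ frontier Q := by
      refine ⟨subset_closure ht₀T.2, ?_⟩
      intro hint
      rw [mem_interior_iff_mem_nhds, Metric.mem_nhds_iff] at hint
      obtain ⟨δ, hδ, hδsub⟩ := hint
      set t₁ : ℝ := min (t₀ + δ/2) tz with ht₁
      have ht₁T : t₁ ∈ T := by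
        refine ⟨⟨le_trans ht₀T.1.1 (le_min (by linarith) ht₀tz.le), min_le_right _ _⟩,
          hδsub ?_⟩
        simp only [mem_ball, dist_eq_norm]
        have heq : x + t₁ • u - (x + t₀ • u) = (t₁ - t₀) • u := by
          rw [sub_smul]; abel
        rw [heq, norm_smul, huu, mul_one, Real.norm_eq_abs]
        have h1 : t₀ ≤ t₁ := le_min (by linarith) ht₀tz.le
        have h2 : t₁ ≤ t₀ + δ/2 := min_le_left _ _
        rw [abs_of_nonneg (by linarith)]
        linarith
      have h3 : t₁ ≤ t₀ := le_csSup hTbdd ht₁T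
      have h4 : t₀ < t₁ := lt_min (by linarith) ht₀tz
      linarith
    have h5 : infDist x (frontier Q) ≤ t₀ := by
      have := infDist_le_dist_of_mem (x := x) hfr
      rwa [dist_eq_norm, show x - (x + t₀ • u) = -(t₀ • u) by abel, norm_neg, norm_smul,
        huu, mul_one, Real.norm_eq_abs, abs_of_nonneg ht₀T.1.1] at this
    rw [mem_ball, dist_eq_norm] at hz
    have : tz < ε := hz
    linarith
  calc closedBall x ε = closure (ball x ε) := (closure_ball x hε.ne').symm
    _ ⊆ Q := closure_minimal hball' hQc.isClosed

end BallIn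

end Stmt6Aux


set_option maxHeartbeats 1000000 in
/-- On a compact convex polytope `Q ⊂ ℝ^m` with nonempty interior, any
normalized nonnegative convex function `v` (continuous on `Q`, differentiable in the
interior, `v ≥ 0`, `v x₀ = 0`) with boundary integral `∫_{∂Q} v dσ ≤ C₁` is bounded on
`Q_ε` by a constant depending only on `ε`, `C₁` and `Q`. Here the boundary measure is the
`(m-1)`-dimensional Hausdorff measure restricted to `∂Q`. -/
theorem stmt6 (m : ℕ) (Q : Set (EuclideanSpace ℝ (Fin m)))
    (hQc : IsCompact Q) (hQconv : Convex ℝ Q) (hQint : (interior Q).Nonempty)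
    (x₀ : EuclideanSpace ℝ (Fin m)) (hx₀ : x₀ ∈ interior Q) (C₁ : ℝ) :
    ∀ ε > (0:ℝ), ∃ C : ℝ,
      ∀ v : EuclideanSpace ℝ (Fin m) → ℝ,
        ContinuousOn v Q →
        ConvexOn ℝ Q v →
        DifferentiableOn ℝ v (interior Q) →
        (∀ x ∈ Q, 0 ≤ v x) →
        v x₀ = 0 →
        (∫ x, v x ∂((μH[(m : ℝ) - 1]).restrict (frontier Q))) ≤ C₁ →
        ∀ x ∈ Q, ε ≤ infDist x (frontier Q) → v x ≤ C := by
  intro ε hε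
  rcases m with _ | n
  · -- trivial case: the space is a point
    haveI : Subsingleton (EuclideanSpace ℝ (Fin 0)) :=
      ⟨fun a b => by ext i; exact i.elim0⟩
    refine ⟨0, fun v _ _ _ _ _ _ x hx hdist => absurd hdist ?_⟩
    obtain ⟨z, hz⟩ := hQint
    have hfr : frontier Q = ∅ := by
      rw [eq_empty_iff_forall_notMem]
      intro y hy
      exact hy.2 (Subsingleton.elim z y ▸ hz)
    rw [hfr, infDist_empty]
    exact not_le.2 hε
  -- main case `m = n + 1`
  have hcast : ((n + 1 : ℕ) : ℝ) - 1 = (n : ℝ) := by push_cast; ring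
  rw [hcast]
  -- inner ball at x₀
  rw [mem_interior_iff_mem_nhds, Metric.mem_nhds_iff] at hx₀
  obtain ⟨r', hr', hr'sub⟩ := hx₀
  have hρ : (0:ℝ) < r'/2 := by linarith
  have hballQ : closedBall x₀ (r'/2) ⊆ Q :=
    (closedBall_subset_ball (by linarith)).trans hr'sub
  have hPpos : 0 < μH[(n:ℝ)] (frontier Q) := stmt6_frontier_pos hQc hρ hballQ
  have hPtop : μH[(n:ℝ)] (frontier Q) < ⊤ := stmt6_frontier_lt_top hQc hQconv hρ hballQ
  set P : ℝ≥0∞ := μH[(n:ℝ)] (frontier Q) with hP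
  set D : ℝ := diam Q with hD
  have hD0 : 0 ≤ D := diam_nonneg
  set Kr : ℝ := (D + D^2/ε) * (2/ε) with hKr
  have hKr0 : 0 ≤ Kr := by positivity
  set K : ℝ≥0 := Real.toNNReal Kr with hK
  set kk : ℝ≥0∞ := 1 + (K : ℝ≥0∞) ^ (n:ℝ) with hkk
  have hkktop : kk < ⊤ := by
    rw [hkk]
    exact ENNReal.add_lt_top.2 ⟨ENNReal.one_lt_top,
      ENNReal.rpow_lt_top_of_nonneg (Nat.cast_nonneg n) ENNReal.coe_ne_top⟩
  have hkk1 : 1 ≤ kk.toReal := by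
    have h1 : (1:ℝ≥0∞) ≤ kk := by rw [hkk]; exact le_add_of_nonneg_right bot_le
    have := ENNReal.toReal_mono hkktop.ne h1
    simpa using this
  have hPT : 0 < P.toReal := ENNReal.toReal_pos hPpos.ne' hPtop.ne
  refine ⟨2 * kk.toReal * max C₁ 0 / P.toReal, ?_⟩
  intro v hvcont hvconv _ hvnn _ hvint x hxQ hxd
  have hfrmeas : MeasurableSet (frontier Q) := isClosed_frontier.measurableSet
  have hsubQ : frontier Q ⊆ Q := hQc.isClosed.frontier_subset
  -- the ball of radius ε around x is inside Q
  have hbx : closedBall x ε ⊆ Q := stmt6_ball_subset hQc hε hxQ hxd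
  have hfar : ∀ y ∈ frontier Q, ε ≤ ‖x - y‖ := by
    intro y hy
    have := infDist_le_dist_of_mem (x := x) hy
    rw [dist_eq_norm] at this
    linarith
  -- the antipodal map through x
  set A : EuclideanSpace ℝ (Fin (n+1)) → EuclideanSpace ℝ (Fin (n+1)) :=
    fun y => rayMap Q x (x + (x - y)) with hA
  have hAnorm : ∀ y : EuclideanSpace ℝ (Fin (n+1)), (x + (x - y)) - x = x - y := by
    intro y; abel
  have hAfr : ∀ y ∈ frontier Q, A y ∈ frontier Q := by
    intro y hy
    apply rayMap_mem_frontier hQc hQconv hε hbx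
    intro hcon
    have := hfar y hy
    rw [← hAnorm y, hcon, sub_self, norm_zero] at this
    linarith
  -- formula for A on the frontier
  have hAform : ∀ y : EuclideanSpace ℝ (Fin (n+1)),
      A y = x + raySup Q x (‖x - y‖⁻¹ • (x - y)) • (‖x - y‖⁻¹ • (x - y)) := by
    intro y
    show rayMap Q x (x + (x - y)) = _
    rw [rayMap, hAnorm y]
  -- convexity inequality
  have hAconv : ∀ y ∈ frontier Q, v x ≤ v y + v (A y) := by
    intro y hy
    have hρy : (0:ℝ) < ‖x - y‖ := lt_of_lt_of_le hε (hfar y hy)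
    have huu : ‖(‖x - y‖⁻¹ • (x - y))‖ = 1 := norm_smul_inv_norm (norm_pos_iff.1 hρy)
    obtain ⟨hσ1, hσ2, hσ3⟩ := raySup_spec hQc hQconv hε hbx huu
    set σ : ℝ := raySup Q x (‖x - y‖⁻¹ • (x - y)) with hσdef
    have hσ0 : 0 < σ := lt_of_lt_of_le hε hσ1
    have hs0 : 0 < σ + ‖x - y‖ := by positivity
    have hAy : A y = x + σ • (‖x - y‖⁻¹ • (x - y)) := hAform y
    have hcomb : (σ/(σ + ‖x - y‖)) • y
        + (‖x - y‖/(σ + ‖x - y‖)) • (x + σ • (‖x - y‖⁻¹ • (x - y))) = x := by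
      have h1 : ‖x - y‖/(σ + ‖x - y‖) * σ * ‖x - y‖⁻¹ = σ/(σ + ‖x - y‖) := by
        field_simp
      rw [smul_add, smul_smul, smul_smul, h1, smul_sub]
      have h2 : (σ/(σ + ‖x - y‖)) • y + ((‖x - y‖/(σ + ‖x - y‖)) • x
          + ((σ/(σ + ‖x - y‖)) • x - (σ/(σ + ‖x - y‖)) • y))
          = (σ/(σ + ‖x - y‖) + ‖x - y‖/(σ + ‖x - y‖)) • x := by
        rw [add_smul]; abel
      rw [h2]
      have h3 : σ/(σ + ‖x - y‖) + ‖x - y‖/(σ + ‖x - y‖) = 1 := by field_simp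
      rw [h3, one_smul]
    have hvineq := hvconv.2 (hsubQ hy) (hsubQ (hAfr y hy))
      (by positivity : (0:ℝ) ≤ σ/(σ + ‖x - y‖))
      (by positivity : (0:ℝ) ≤ ‖x - y‖/(σ + ‖x - y‖))
      (by field_simp : σ/(σ + ‖x - y‖) + ‖x - y‖/(σ + ‖x - y‖) = 1)
    rw [hAy, hcomb, ← hAy] at hvineq
    have hvy : 0 ≤ v y := hvnn y (hsubQ hy)
    have hvAy : 0 ≤ v (A y) := hvnn _ (hsubQ (hAfr y hy))
    have ha1 : σ/(σ + ‖x - y‖) ≤ 1 := by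
      rw [div_le_one hs0]; linarith
    have hb1 : ‖x - y‖/(σ + ‖x - y‖) ≤ 1 := by
      rw [div_le_one hs0]; linarith
    simp only [smul_eq_mul] at hvineq
    nlinarith [hvineq, ha1, hb1, hvy, hvAy]
  -- A is an involution on the frontier
  have hAA : ∀ y ∈ frontier Q, A (A y) = y := by
    intro y hy
    have hρy : (0:ℝ) < ‖x - y‖ := lt_of_lt_of_le hε (hfar y hy)
    have huu : ‖(‖x - y‖⁻¹ • (x - y))‖ = 1 := norm_smul_inv_norm (norm_pos_iff.1 hρy)
    obtain ⟨hσ1, hσ2, hσ3⟩ := raySup_spec hQc hQconv hε hbx huu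
    set σ : ℝ := raySup Q x (‖x - y‖⁻¹ • (x - y)) with hσdef
    have hσ0 : 0 < σ := lt_of_lt_of_le hε hσ1
    set u : EuclideanSpace ℝ (Fin (n+1)) := ‖x - y‖⁻¹ • (x - y) with hu
    have hAy : A y = x + σ • u := hAform y
    have hxAy : x - A y = -(σ • u) := by rw [hAy]; abel
    have hnAy : ‖x - A y‖ = σ := by
      rw [hxAy, norm_neg, norm_smul, huu, mul_one, Real.norm_eq_abs, abs_of_pos hσ0]
    have hdir : ‖x - A y‖⁻¹ • (x - A y) = -u := by
      rw [hnAy, hxAy, smul_neg, smul_smul, inv_mul_cancel₀ hσ0.ne', one_smul]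
    have hray : raySup Q x (-u) = ‖x - y‖ := by
      refine (raySup_unique hQc hQconv hε hbx (by rw [norm_neg]; exact huu) hρy.le ?_).symm
      have heq2 : x + ‖x - y‖ • (-u) = y := by
        rw [hu, smul_neg, smul_smul, mul_inv_cancel₀ hρy.ne', one_smul]; abel
      rwa [heq2]
    have hform2 : A (A y)
        = x + raySup Q x (‖x - A y‖⁻¹ • (x - A y)) • (‖x - A y‖⁻¹ • (x - A y)) :=
      hAform (A y)
    rw [hform2, hdir, hray, hu, smul_neg, smul_smul, mul_inv_cancel₀ hρy.ne', one_smul]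
    abel
  -- A is Lipschitz on the frontier
  have hAlip : LipschitzOnWith K A (frontier Q) := by
    apply LipschitzOnWith.of_dist_le_mul
    intro y₁ h₁ y₂ h₂
    rw [dist_eq_norm, dist_eq_norm]
    have h3 : ε ≤ ‖(x + (x - y₁)) - x‖ := by rw [hAnorm]; exact hfar y₁ h₁
    have h4 : ε ≤ ‖(x + (x - y₂)) - x‖ := by rw [hAnorm]; exact hfar y₂ h₂
    have := rayMap_lip hQc hQconv hε hbx hε h3 h4
    have h5 : ‖(x + (x - y₁)) - (x + (x - y₂))‖ = ‖y₁ - y₂‖ := by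
      rw [show (x + (x - y₁)) - (x + (x - y₂)) = -(y₁ - y₂) by abel, norm_neg]
    rw [h5] at this
    rw [hK, Real.coe_toNNReal _ hKr0, hKr]
    exact this
  -- the covering of the frontier
  set M : ℝ := v x with hM
  set S : Set (EuclideanSpace ℝ (Fin (n+1))) := frontier Q ∩ {y | M/2 ≤ v y} with hS
  have hcover : frontier Q ⊆ S ∪ A '' S := by
    intro y hy
    rcases le_or_gt (M/2) (v y) with h | h
    · exact Or.inl ⟨hy, h⟩
    · right
      have h1 : M/2 ≤ v (A y) := by
        have h2 := hAconv y hy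
        linarith
      exact ⟨A y, ⟨hAfr y hy, h1⟩, hAA y hy⟩
  -- measure estimates
  have hμcover : P ≤ kk * μH[(n:ℝ)] S := by
    calc P ≤ μH[(n:ℝ)] (S ∪ A '' S) := measure_mono hcover
      _ ≤ μH[(n:ℝ)] S + μH[(n:ℝ)] (A '' S) := measure_union_le _ _
      _ ≤ μH[(n:ℝ)] S + ((K : ℝ≥0∞) ^ (n:ℝ)) * μH[(n:ℝ)] S := by
          refine add_le_add le_rfl ?_
          exact (hAlip.mono inter_subset_left).hausdorffMeasure_image_le (Nat.cast_nonneg n)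
      _ = kk * μH[(n:ℝ)] S := by rw [hkk, add_mul, one_mul]
  have hμSfin : μH[(n:ℝ)] S < ⊤ := lt_of_le_of_lt (measure_mono inter_subset_left) hPtop
  have hμSR : P.toReal ≤ kk.toReal * (μH[(n:ℝ)] S).toReal := by
    have h1 : kk * μH[(n:ℝ)] S ≠ ⊤ := (ENNReal.mul_lt_top hkktop hμSfin).ne
    have := ENNReal.toReal_mono h1 hμcover
    rwa [ENNReal.toReal_mul] at this
  -- integrability of v on the frontier
  haveI hfinmeas : IsFiniteMeasure ((μH[(n:ℝ)]).restrict (frontier Q)) := by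
    constructor
    rw [Measure.restrict_apply_univ]
    exact hPtop
  obtain ⟨Bv, hBv⟩ : ∃ B : ℝ, ∀ z ∈ v '' Q, ‖z‖ ≤ B :=
    isBounded_iff_forall_norm_le.1 (hQc.image_of_continuousOn hvcont).isBounded
  have hvint' : Integrable v ((μH[(n:ℝ)]).restrict (frontier Q)) := by
    constructor
    · exact (hvcont.mono hsubQ).aestronglyMeasurable hfrmeas
    · apply HasFiniteIntegral.of_bounded (C := Bv)
      refine (ae_restrict_iff' hfrmeas).2 (Filter.Eventually.of_forall fun y hy => ?_)
      exact hBv _ ⟨y, hsubQ hy, rfl⟩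
  have hae : 0 ≤ᵐ[(μH[(n:ℝ)]).restrict (frontier Q)] v := by
    refine (ae_restrict_iff' hfrmeas).2 (Filter.Eventually.of_forall fun y hy => ?_)
    exact hvnn y (hsubQ hy)
  -- Markov's inequality
  have hmarkov := mul_meas_ge_le_integral_of_nonneg hae hvint' (M/2)
  have hset : ((μH[(n:ℝ)]).restrict (frontier Q)) {y | M/2 ≤ v y} = μH[(n:ℝ)] S := by
    rw [Measure.restrict_apply' hfrmeas, hS, inter_comm]
  rw [measureReal_def, hset] at hmarkov
  have hintle : ∫ y, v y ∂((μH[(n:ℝ)]).restrict (frontier Q)) ≤ max C₁ 0 :=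
    le_trans hvint (le_max_left _ _)
  -- final arithmetic
  set μs : ℝ := (μH[(n:ℝ)] S).toReal with hμs
  have hμs0 : 0 ≤ μs := ENNReal.toReal_nonneg
  have hmax0 : 0 ≤ max C₁ 0 := le_max_right _ _
  have hkk0 : 0 < kk.toReal := by linarith
  rcases le_or_gt M 0 with hM0 | hM0
  · have : 0 ≤ 2 * kk.toReal * max C₁ 0 / P.toReal := by positivity
    linarith
  · have hμspos : 0 < μs := by nlinarith
    have h7 : M/2 * μs ≤ max C₁ 0 := le_trans hmarkov hintle
    have h8 : M * P.toReal ≤ M * (kk.toReal * μs) := by nlinarith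
    have h9 : M * (kk.toReal * μs) ≤ 2 * kk.toReal * max C₁ 0 := by nlinarith
    rw [div_eq_mul_inv]
    calc M = M * P.toReal * P.toReal⁻¹ := by field_simp
      _ ≤ 2 * kk.toReal * max C₁ 0 * P.toReal⁻¹ := by
          apply mul_le_mul_of_nonneg_right _ (by positivity)
          linarith
end

section
/- Let P ⊂ ℝ^n be a compact convex polytope with nonempty interior and u : int P → ℝ a convex function with ∫_{P_ε} u² dμ ≤ C(ε) for every ε > 0, where P_ε is the set of points at distance ≥ ε from ∂P. Then for every p ∈ int P there is a constant C(p), depending only on C(·), P, and dist(p, ∂P), such that |u(p)| ≤ C(p). -/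
open Set MeasureTheory Metric

/-- Let `P ⊂ ℝ^n` be a compact convex polytope with nonempty interior and
`P_ε := {x ∈ P : dist(x, ∂P) ≥ ε}`. If a convex function `u` on the interior of `P`
satisfies `∫_{P_ε} u² ≤ C(ε)` for every `ε > 0`, then `u` is pointwise bounded in the
interior, with a bound depending only on `C(·)`, `P` and the distance to the boundary. -/
theorem stmt14 (n : ℕ) (P : Set (EuclideanSpace ℝ (Fin n)))
    (hPc : IsCompact P) (hPconv : Convex ℝ P) (hPint : (interior P).Nonempty)
    (C : ℝ → ℝ) :
    ∀ ε > (0:ℝ), ∃ Cp : ℝ,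
      ∀ u : EuclideanSpace ℝ (Fin n) → ℝ,
        ConvexOn ℝ (interior P) u →
        ContinuousOn u (interior P) →
        (∀ δ > (0:ℝ),
          ∫ x in {x ∈ P | δ ≤ infDist x (frontier P)}, (u x) ^ 2 ≤ C δ) →
        ∀ p ∈ interior P, ε ≤ infDist p (frontier P) → |u p| ≤ Cp := by
  classical
  intro ε hε
  have hε4 : (0:ℝ) < ε/4 := by linarith
  have hε8 : (0:ℝ) < ε/8 := by linarith
  set V : ℝ := (volume (closedBall (0 : EuclideanSpace ℝ (Fin n)) (ε/4))).toReal with hVdef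
  have hV : 0 < V := ENNReal.toReal_pos (measure_closedBall_pos volume 0 hε4).ne'
    measure_closedBall_lt_top.ne
  set M : ℝ := ((volume P).toReal + C (ε/2)) / 2 with hMdef
  refine ⟨(2 ^ (n+1) + 1) * M / V, ?_⟩
  intro u hconv hcont hL2 p hpP hp
  set Q : Set (EuclideanSpace ℝ (Fin n)) := {x ∈ P | ε/2 ≤ infDist x (frontier P)} with hQdef
  -- the ball of radius ε around p is inside the interior of P
  have hballI : ball p ε ⊆ interior P := by
    have hsub : ball p ε ⊆ interior P ∪ Pᶜ := by
      intro x hx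
      have hxf : x ∉ frontier P := by
        intro hf
        have h1 : ε ≤ dist p x := hp.trans (infDist_le_dist_of_mem hf)
        have h2 : dist x p < ε := mem_ball.mp hx
        rw [dist_comm] at h2; linarith
      by_cases hxP : x ∈ P
      · left
        by_contra hxi
        exact hxf (by rw [hPc.isClosed.frontier_eq]; exact ⟨hxP, hxi⟩)
      · right; exact hxP
    rcases (convex_ball p ε).isPreconnected.subset_or_subset isOpen_interior
        hPc.isClosed.isOpen_compl
        ((disjoint_compl_right).mono_left interior_subset) hsub with h | h
    · exact h
    · exact absurd (h (mem_ball_self hε)) (not_not.mpr (interior_subset hpP))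
  set B : Set (EuclideanSpace ℝ (Fin n)) := closedBall p (ε/4) with hBdef
  set B' : Set (EuclideanSpace ℝ (Fin n)) := closedBall p (ε/8) with hB'def
  have hBball : B ⊆ ball p ε := closedBall_subset_ball (by linarith)
  have hBI : B ⊆ interior P := hBball.trans hballI
  have hB'B : B' ⊆ B := closedBall_subset_closedBall (by linarith)
  have hBQ : B ⊆ Q := by
    intro x hx
    refine ⟨interior_subset (hBI hx), ?_⟩
    have h1 : infDist p (frontier P) ≤ infDist x (frontier P) + dist p x :=
      infDist_le_infDist_add_dist
    have h2 : dist x p ≤ ε/4 := mem_closedBall.mp hx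
    rw [dist_comm] at h2
    linarith
  have hQI : Q ⊆ interior P := by
    intro x hx
    by_contra hxi
    have hxf : x ∈ frontier P := by rw [hPc.isClosed.frontier_eq]; exact ⟨hx.1, hxi⟩
    have h2 := hx.2
    rw [infDist_zero_of_mem hxf] at h2
    linarith
  have hQclosed : IsClosed Q := by
    have : Q = P ∩ (fun x => infDist x (frontier P)) ⁻¹' Ici (ε/2) := by
      ext x; simp [hQdef, Set.mem_sep_iff]
    rw [this]
    exact hPc.isClosed.inter (isClosed_Ici.preimage (continuous_infDist_pt _))
  have hQcomp : IsCompact Q := hPc.of_isClosed_subset hQclosed (sep_subset _ _)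
  have huQ : IntegrableOn u Q := (hcont.mono hQI).integrableOn_compact hQcomp
  have hu2Q : IntegrableOn (fun x => u x ^ 2) Q :=
    ((hcont.mono hQI).pow 2).integrableOn_compact hQcomp
  have hQfin : volume Q < ⊤ := hQcomp.measure_lt_top
  -- key : integrals of u over measurable subsets of Q are bounded by M
  have hkey : ∀ S : Set (EuclideanSpace ℝ (Fin n)), MeasurableSet S → S ⊆ Q →
      |∫ x in S, u x| ≤ M := by
    intro S hSm hSQ
    have hiS : IntegrableOn u S := huQ.mono_set hSQ
    have hiS2 : IntegrableOn (fun x => u x ^ 2) S := hu2Q.mono_set hSQ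
    have hSfin : volume S < ⊤ := lt_of_le_of_lt (measure_mono hSQ) hQfin
    have hconst : IntegrableOn (fun _ : EuclideanSpace ℝ (Fin n) => (1:ℝ)) S :=
      integrableOn_const hSfin.ne
    calc |∫ x in S, u x| ≤ ∫ x in S, |u x| := by
          simpa [Real.norm_eq_abs] using
            norm_integral_le_integral_norm (μ := volume.restrict S) u
      _ ≤ ∫ x in S, (1 + u x ^ 2) / 2 := by
          refine setIntegral_mono_on hiS.abs ((hconst.add hiS2).div_const 2) hSm ?_
          intro x _
          nlinarith [sq_nonneg (|u x| - 1), sq_abs (u x)]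
      _ = ((volume S).toReal + ∫ x in S, u x ^ 2) / 2 := by
          rw [integral_div, integral_add hconst hiS2, setIntegral_const]
          simp
          rfl
      _ ≤ ((volume P).toReal + C (ε/2)) / 2 := by
          have h1 : (volume S).toReal ≤ (volume P).toReal :=
            ENNReal.toReal_mono hPc.measure_lt_top.ne
              (measure_mono (hSQ.trans (sep_subset _ _)))
          have h2 : ∫ x in S, u x ^ 2 ≤ ∫ x in Q, u x ^ 2 :=
            setIntegral_mono_set hu2Q
              (Filter.Eventually.of_forall fun x => sq_nonneg _)
              (HasSubset.Subset.eventuallyLE hSQ)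
          have h3 : ∫ x in Q, u x ^ 2 ≤ C (ε/2) := hL2 (ε/2) (by linarith)
          linarith
      _ = M := rfl
  have hBm : MeasurableSet B := Metric.isClosed_closedBall.measurableSet
  have hB'm : MeasurableSet B' := Metric.isClosed_closedBall.measurableSet
  have hBcomp : IsCompact B := isCompact_closedBall p (ε/4)
  have hintB : |∫ x in B, u x| ≤ M := hkey B hBm hBQ
  have hintB' : |∫ x in B', u x| ≤ M := hkey B' hB'm (hB'B.trans hBQ)
  have hM0 : (0:ℝ) ≤ M := le_trans (abs_nonneg _) hintB
  have hiB : IntegrableOn u B := huQ.mono_set hBQ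
  have hBfin : volume B < ⊤ := lt_of_le_of_lt (measure_mono hBQ) hQfin
  have hVB : (volume B).toReal = V := by
    rw [hVdef, hBdef, Measure.addHaar_closedBall_center volume p]
  -- reflection : x ↦ p + p - x maps B to itself
  have hreflB : ∀ x : EuclideanSpace ℝ (Fin n), x ∈ B ↔ p + p - x ∈ B := by
    intro x
    have hnorm : ‖p + p - x - p‖ = ‖x - p‖ := by
      rw [show p + p - x - p = -(x - p) by abel, norm_neg]
    simp only [hBdef, mem_closedBall, dist_eq_norm, hnorm]
  have hiBrefl : IntegrableOn (fun x => u (p + p - x)) B := by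
    refine (hcont.comp ((continuous_const.sub continuous_id).continuousOn) ?_).integrableOn_compact
      hBcomp
    intro x hx
    exact hBI ((hreflB x).mp hx)
  have hrefl_int : ∫ x in B, u (p + p - x) = ∫ x in B, u x := by
    rw [← integral_indicator hBm, ← integral_indicator hBm]
    have h1 : ∀ x, B.indicator (fun y => u (p + p - y)) x = B.indicator u (p + p - x) := by
      intro x
      by_cases hx : x ∈ B
      · rw [indicator_of_mem hx, indicator_of_mem ((hreflB x).mp hx)]
      · rw [indicator_of_notMem hx, indicator_of_notMem (fun h => hx ((hreflB x).mpr h))]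
    simp_rw [h1, sub_eq_add_neg]
    rw [show (∫ x, B.indicator u (p + p + -x)) =
        ∫ x, (fun y => B.indicator u (p + p + y)) (-x) from rfl]
    rw [integral_neg_eq_self (fun y => B.indicator u (p + p + y)) volume]
    exact integral_add_left_eq_self (B.indicator u) (p + p)
  -- upper bound
  have hupper : V * u p ≤ M := by
    have hconvmid : ∀ x ∈ B, u p ≤ (u x + u (p + p - x)) / 2 := by
      intro x hx
      have hx1 : x ∈ interior P := hBI hx
      have hx2 : p + p - x ∈ interior P := hBI ((hreflB x).mp hx)
      have h := hconv.2 hx1 hx2 (by norm_num : (0:ℝ) ≤ 1/2) (by norm_num : (0:ℝ) ≤ 1/2)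
        (by norm_num : (1/2:ℝ) + 1/2 = 1)
      have heq : (1/2 : ℝ) • x + (1/2 : ℝ) • (p + p - x) = p := by module
      rw [heq] at h
      simp only [smul_eq_mul] at h
      linarith
    have h1 : ∫ _x in B, u p ≤ ∫ x in B, (u x + u (p + p - x)) / 2 :=
      setIntegral_mono_on (integrableOn_const hBfin.ne)
        ((hiB.add hiBrefl).div_const 2) hBm hconvmid
    rw [setIntegral_const, integral_div, integral_add hiB hiBrefl, hrefl_int, measureReal_def, hVB,
      smul_eq_mul] at h1
    have h2 : ∫ x in B, u x ≤ M := le_trans (le_abs_self _) hintB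
    linarith
  -- scaling : x ↦ (1/2)•(p+x) maps B to B'
  have hφB : ∀ x : EuclideanSpace ℝ (Fin n), x ∈ B ↔ (1/2 : ℝ) • (p + x) ∈ B' := by
    intro x
    have heq : (1/2 : ℝ) • (p + x) - p = (1/2 : ℝ) • (x - p) := by module
    simp only [hBdef, hB'def, mem_closedBall, dist_eq_norm, heq, norm_smul]
    rw [show ‖(1/2 : ℝ)‖ = 1/2 by simp]
    constructor <;> intro h <;> linarith
  have hiBφ : IntegrableOn (fun x => u ((1/2:ℝ) • (p + x))) B := by
    refine (hcont.comp ((continuous_const_smul _).comp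
      (continuous_const.add continuous_id)).continuousOn ?_).integrableOn_compact hBcomp
    intro x hx
    exact hBI (hB'B ((hφB x).mp hx))
  have hscale : ∫ x in B, u ((1/2:ℝ) • (p + x)) = 2^n * ∫ x in B', u x := by
    rw [← integral_indicator hBm, ← integral_indicator hB'm]
    have h1 : ∀ x, B.indicator (fun y => u ((1/2:ℝ) • (p + y))) x
        = B'.indicator u ((1/2:ℝ) • (p + x)) := by
      intro x
      by_cases hx : x ∈ B
      · rw [indicator_of_mem hx, indicator_of_mem ((hφB x).mp hx)]
      · rw [indicator_of_notMem hx, indicator_of_notMem (fun h => hx ((hφB x).mpr h))]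
    simp_rw [h1, smul_add]
    have h3 := MeasureTheory.Measure.integral_comp_smul volume
      (fun y => B'.indicator u ((1/2:ℝ) • p + y)) (1/2 : ℝ)
    rw [integral_add_left_eq_self (B'.indicator u) ((1/2:ℝ) • p)] at h3
    rw [h3, finrank_euclideanSpace_fin, smul_eq_mul]
    congr 1
    rw [one_div, inv_pow, inv_inv, abs_of_nonneg (by positivity)]
  -- lower bound
  have h2n : (0:ℝ) < 2^n := pow_pos two_pos n
  have hlower : -((2^(n+1) + 1) * M) ≤ V * u p := by
    have hconvmid2 : ∀ x ∈ B, 2 * u ((1/2:ℝ) • (p + x)) - u x ≤ u p := by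
      intro x hx
      have hx1 : x ∈ interior P := hBI hx
      have h := hconv.2 hpP hx1 (by norm_num : (0:ℝ) ≤ 1/2) (by norm_num : (0:ℝ) ≤ 1/2)
        (by norm_num : (1/2:ℝ) + 1/2 = 1)
      have heq : (1/2 : ℝ) • p + (1/2 : ℝ) • x = (1/2:ℝ) • (p + x) := (smul_add _ _ _).symm
      rw [heq] at h
      simp only [smul_eq_mul] at h
      linarith
    have h1 : ∫ x in B, (2 * u ((1/2:ℝ) • (p + x)) - u x) ≤ ∫ _x in B, u p :=
      setIntegral_mono_on ((hiBφ.const_mul 2).sub hiB)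
        (integrableOn_const hBfin.ne) hBm hconvmid2
    rw [setIntegral_const, measureReal_def, hVB, smul_eq_mul,
      integral_sub (hiBφ.const_mul 2) hiB, integral_const_mul, hscale] at h1
    have e1 : -M ≤ ∫ x in B', u x := neg_le_of_abs_le hintB'
    have e2 : ∫ x in B, u x ≤ M := le_trans (le_abs_self _) hintB
    have e3 : 2^n * (-M) ≤ 2^n * ∫ x in B', u x :=
      mul_le_mul_of_nonneg_left e1 (le_of_lt h2n)
    have hpow : (2:ℝ)^(n+1) = 2^n * 2 := pow_succ 2 n
    rw [hpow]
    linarith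
  -- conclusion
  clear_value V M
  have hX : M ≤ (2^(n+1) + 1) * M := by
    have h := mul_nonneg (pow_nonneg (by norm_num : (0:ℝ) ≤ 2) (n+1)) hM0
    linarith
  rw [abs_le]
  constructor
  · rw [← neg_div, div_le_iff₀ hV]
    rw [mul_comm] at hlower
    linarith
  · rw [le_div_iff₀ hV]
    rw [mul_comm] at hupper
    linarith
end
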